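/- Let (K, δ) be a differential field of characteristic zero, let A = ℚ-span of logarithmic derivatives of K, let S ⊆ K \ {0} be finite, and let A_S' be a ℤ-complement of A ∩ ⟨S⟩ in the group ⟨S⟩ generated by S. If A_S' = 0 (equivalently S ⊆ A), then there exists a differential field extension (E, δ_E) of (K, δ) with E/K a finite field extension such that for every a ∈ S the equation δ_E(y) = a·y has a nonzero solution in E. -/

import Mathlib

open Polynomial IntermediateField
open scoped Differential

private lemma pow_rule' {E : Type*} [CommRing E] (f : E → E)
    (hmul : ∀ x y : E, f (x * y) = f x * y + x * f y) (Y : E) :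
    ∀ k : ℕ, f (Y ^ (k + 1)) = ((k + 1 : ℕ) : E) * Y ^ k * f Y := by
  intro k
  induction k with
  | zero => simpa using hmul Y 1
  | succ k ih =>
    have h : Y ^ (k + 1 + 1) = Y ^ (k + 1) * Y := by ring
    rw [h, hmul, ih]
    push_cast
    ring

private lemma extend_deriv {K : Type*} [Field K] [CharZero K] (δ : K → K)
    (hadd : ∀ a b : K, δ (a + b) = δ a + δ b)
    (hmul : ∀ a b : K, δ (a * b) = δ a * b + a * δ b)
    (E : IntermediateField K (AlgebraicClosure K)) [FiniteDimensional K E] :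
    ∃ δE : E → E,
      (∀ x y : E, δE (x + y) = δE x + δE y) ∧
      (∀ x y : E, δE (x * y) = δE x * y + x * δE y) ∧
      (∀ a : K, δE (algebraMap K E a) = algebraMap K E (δ a)) := by
  classical
  have h1 : δ 1 = 0 := by
    have := hmul 1 1
    simp at this
    exact this
  letI : Differential K :=
    ⟨{ __ := (AddMonoidHom.mk' δ (fun a b => hadd a b)).toIntLinearMap
       map_one_eq_zero' := h1
       leibniz' := fun a b => by
         simp only [smul_eq_mul]
         show δ (a * b) = a * δ b + b * δ a
         rw [hmul]; ring }⟩
  have hder : ∀ a : K, a′ = δ a := fun _ => rfl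
  obtain ⟨α, hα⟩ := Field.exists_primitive_element K E
  have hint : IsIntegral K α := IsIntegral.of_finite K α
  have surj : ∀ x : E, ∃ p : K[X], aeval α p = x := by
    intro x
    have hx : x ∈ K⟮α⟯ := hα.symm ▸ IntermediateField.mem_top
    rwa [← IntermediateField.mem_toSubalgebra,
        IntermediateField.adjoin_simple_toSubalgebra_of_isAlgebraic hint.isAlgebraic,
        Algebra.adjoin_singleton_eq_range_aeval, AlgHom.mem_range] at hx
  set m : K[X] := minpoly K α with hm
  have hm0 : aeval α m = 0 := minpoly.aeval K α
  have hsep : m.Separable := (minpoly.irreducible hint).separable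
  have hβ : aeval α (derivative m) ≠ 0 := hsep.aeval_derivative_ne_zero hm0
  obtain ⟨v, hv⟩ := surj (-(aeval α (Differential.mapCoeffs m)) / aeval α (derivative m))
  set DE : K[X] → E :=
    fun p => aeval α (Differential.mapCoeffs p) + aeval α v * aeval α (derivative p) with hDE
  have DE_add : ∀ p q : K[X], DE (p + q) = DE p + DE q := by
    intro p q
    simp only [hDE, map_add, derivative_add]
    ring
  have DE_sub : ∀ p q : K[X], DE (p - q) = DE p - DE q := by
    intro p q
    simp only [hDE, map_sub, derivative_sub]
    ring
  have DE_mul : ∀ p q : K[X], DE (p * q) = DE p * aeval α q + aeval α p * DE q := by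
    intro p q
    simp only [hDE, Derivation.leibniz, smul_eq_mul, derivative_mul, map_add, map_mul]
    ring
  have DE_m : DE m = 0 := by
    rw [hDE]
    simp only [hv]
    rw [div_mul_cancel₀ _ hβ]
    ring
  have DE_ker : ∀ p : K[X], aeval α p = 0 → DE p = 0 := by
    intro p hp
    obtain ⟨r, rfl⟩ := minpoly.dvd K α hp
    rw [DE_mul, DE_m, hm0]
    ring
  have DE_wd : ∀ p q : K[X], aeval α p = aeval α q → DE p = DE q := by
    intro p q h
    have h2 : DE (p - q) = 0 := DE_ker _ (by rw [map_sub, h, sub_self])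
    rw [DE_sub] at h2
    exact sub_eq_zero.mp h2
  set δE : E → E := fun x => DE (surj x).choose with hδE
  have key : ∀ p : K[X], δE (aeval α p) = DE p :=
    fun p => DE_wd _ _ ((surj (aeval α p)).choose_spec)
  refine ⟨δE, ?_, ?_, ?_⟩
  · intro x y
    obtain ⟨p, rfl⟩ := surj x
    obtain ⟨q, rfl⟩ := surj y
    rw [← map_add, key, key, key, DE_add]
  · intro x y
    obtain ⟨p, rfl⟩ := surj x
    obtain ⟨q, rfl⟩ := surj y
    rw [← map_mul, key, key, key, DE_mul]
  · intro a
    rw [show (algebraMap K E a) = aeval α (C a) from (aeval_C _ _).symm, key]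
    simp [hDE, hder, aeval_C]

/-- Let `(K, δ)` be a differential field of characteristic zero and
`S ⊆ K \ {0}` a finite set every element of which lies in
`A = {a | δ(y) = n a y has a nonzero solution in K for some n ≥ 1}` (i.e. `A_S' = 0`).
Then there is a finite differential field extension `(E, δ_E)` of `(K, δ)` containing, for each
`a ∈ S`, a nonzero solution of `δ_E(y) = a y`. -/
theorem stmt7 {K : Type*} [Field K] [CharZero K] (δ : K → K)
    (hadd : ∀ a b : K, δ (a + b) = δ a + δ b)
    (hmul : ∀ a b : K, δ (a * b) = δ a * b + a * δ b)
    (S : Set K) (hSfin : S.Finite) (h0 : (0 : K) ∉ S)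
    (hSA : ∀ a ∈ S, ∃ n : ℕ, 0 < n ∧ ∃ y : K, y ≠ 0 ∧ δ y = (n : K) * a * y) :
    ∃ (E : IntermediateField K (AlgebraicClosure K)) (δE : E → E),
      (∀ x y : E, δE (x + y) = δE x + δE y) ∧
      (∀ x y : E, δE (x * y) = δE x * y + x * δE y) ∧
      (∀ a : K, δE (algebraMap K E a) = algebraMap K E (δ a)) ∧
      FiniteDimensional K E ∧
      ∀ a ∈ S, ∃ y : E, y ≠ 0 ∧ δE y = algebraMap K E a * y := by
  classical
  haveI := hSfin.to_subtype
  choose n hnpos y hy0 hyd using fun a : S => hSA a a.2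
  set L := AlgebraicClosure K
  have zex : ∀ a : S, ∃ z : L, z ^ (n a) = algebraMap K L (y a) :=
    fun a => IsAlgClosed.exists_pow_nat_eq _ (hnpos a)
  choose z hz using zex
  set Z : Set L := Set.range z with hZ
  haveI : Finite Z := (Set.finite_range z).to_subtype
  set E := IntermediateField.adjoin K Z with hE
  haveI : FiniteDimensional K E := IntermediateField.finiteDimensional_adjoin
    (fun x _ => Algebra.IsIntegral.isIntegral x)
  obtain ⟨δE, hEadd, hEmul, hEalg⟩ := extend_deriv δ hadd hmul E
  refine ⟨E, δE, hEadd, hEmul, hEalg, inferInstance, ?_⟩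
  intro a ha
  set a' : S := ⟨a, ha⟩
  have hzE : z a' ∈ E := IntermediateField.subset_adjoin K Z ⟨a', rfl⟩
  set Y : E := ⟨z a', hzE⟩ with hY
  have hYpow : Y ^ (n a') = algebraMap K E (y a') := by
    apply Subtype.ext
    push_cast
    rw [hz a']
  have hY0 : Y ≠ 0 := by
    intro h
    apply hy0 a'
    have h2 : (0 : E) ^ (n a') = algebraMap K E (y a') := h ▸ hYpow
    rw [zero_pow (hnpos a').ne'] at h2
    exact ((_root_.map_eq_zero (algebraMap K E)).mp h2.symm)
  refine ⟨Y, hY0, ?_⟩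
  obtain ⟨k, hk⟩ : ∃ k, n a' = k + 1 := ⟨n a' - 1, (Nat.succ_pred_eq_of_pos (hnpos a')).symm⟩
  have hpow := pow_rule' δE hEmul Y k
  have h2 : δE (Y ^ (k + 1)) = algebraMap K E ((n a' : K) * a * (y a')) := by
    rw [← hk, hYpow, hEalg, hyd a']
  have h4 : ((k + 1 : ℕ) : E) * Y ^ k * δE Y =
      ((k + 1 : ℕ) : E) * Y ^ k * (algebraMap K E a * Y) := by
    rw [← hpow, h2, map_mul, map_mul, map_natCast, ← hYpow, hk]
    push_cast
    ring
  have hc : ((k + 1 : ℕ) : E) * Y ^ k ≠ 0 :=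
    mul_ne_zero (Nat.cast_ne_zero.mpr (Nat.succ_ne_zero k)) (pow_ne_zero k hY0)
  exact mul_left_cancel₀ hc h4
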